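/- If a relational monoid has a relational zero, then it has exactly one unit. -/
import Mathlib


/-- Relational associativity. -/
def RelAssoc {X : Type*} (R : X → X → X → Prop) : Prop :=
  ∀ u x y z : X, (∃ v, R u x v ∧ R v y z) ↔ (∃ v, R u v z ∧ R v x y)

/-- Definedness: `D R x y` iff the composite of `x` and `y` exists. -/
def D {X : Type*} (R : X → X → X → Prop) (x y : X) : Prop := ∃ z, R z x y

/-- Relational left unit. -/
def IsLUnit {X : Type*} (R : X → X → X → Prop) (e : X) : Prop :=
  (∃ x, R x e x) ∧ ∀ x y, R y e x → y = x

/-- Relational right unit. -/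
def IsRUnit {X : Type*} (R : X → X → X → Prop) (e : X) : Prop :=
  (∃ x, R x x e) ∧ ∀ x y, R y x e → y = x

/-- Relational unit: a left or a right unit. -/
def IsUnit' {X : Type*} (R : X → X → X → Prop) (e : X) : Prop :=
  IsLUnit R e ∨ IsRUnit R e

/-- Relational monoid: relationally associative, and every element has a left
unit composable on the left and a right unit composable on the right. -/
def RelMonoid {X : Type*} (R : X → X → X → Prop) : Prop :=
  RelAssoc R ∧ ∀ x, (∃ e, IsLUnit R e ∧ D R e x) ∧ (∃ e, IsRUnit R e ∧ D R x e)

/-- Coherence. -/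
def Coherent {X : Type*} (R : X → X → X → Prop) : Prop :=
  ∀ v x y z, R v x y → D R y z → D R v z

/-- Weak functionality: `R` is a partial operation. -/
def WFun {X : Type*} (R : X → X → X → Prop) : Prop :=
  ∀ x x' y z, R x y z → R x' y z → x = x'

theorem stmt15 {X : Type*} (R : X → X → X → Prop) (hM : RelMonoid R)
    (z : X) (hz : ∀ x, R z z x ∧ R z x z) :
    ∃! e : X, IsUnit' R e := by
  -- every unit is both a left and a right unit
  have both : ∀ e, IsUnit' R e → IsLUnit R e ∧ IsRUnit R e := by
    intro e he
    rcases he with hL | hR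
    · refine ⟨hL, ?_⟩
      obtain ⟨f, hf, w, hw⟩ := (hM.2 e).2
      have h1 : w = f := hL.2 f w hw
      have h2 : w = e := hf.2 e w hw
      rw [← h1, h2] at hf
      exact hf
    · refine ⟨?_, hR⟩
      obtain ⟨⟨f, hf, w, hw⟩, _⟩ := hM.2 e
      have h1 : w = e := hf.2 e w hw
      have h2 : w = f := hR.2 f w hw
      rw [← h2, h1] at hf
      exact hf
  obtain ⟨⟨e, heL, _⟩, _⟩ := hM.2 z
  refine ⟨e, Or.inl heL, ?_⟩
  intro f hf
  obtain ⟨hfL, _⟩ := both f hf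
  obtain ⟨heL', heR⟩ := both e (Or.inl heL)
  -- use the zero to compose f and e
  obtain ⟨v, hv1, hv2⟩ := (hM.1 z f e z).1 ⟨z, (hz f).2, (hz e).2⟩
  have h1 : v = e := hfL.2 e v hv2
  have h2 : v = f := heR.2 f v hv2
  rw [← h1, h2]
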